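/- Let $D_i, D_j, D_k$ be three pairwise intersecting closed disks on the Riemann sphere with exterior intersection angles $\Theta_i, \Theta_j, \Theta_k \in [0,\pi)$, and suppose the union of their interiors is a proper subset of the sphere. If $\Theta_i + \Theta_j + \Theta_k < \pi$, then $D_i \cap D_j \cap D_k = \emptyset$. -/

import Mathlib

open Real
open scoped RealInnerProductSpace

/-- The geodesic distance between two points of the unit sphere in `ℝ³`. -/
noncomputable def sphDist (x y : EuclideanSpace ℝ (Fin 3)) : ℝ :=
  Real.arccos ⟪x, y⟫

/-- The closed spherical disk with center `z` (a unit vector) and radius `r`. -/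
noncomputable def sphDisk (z : EuclideanSpace ℝ (Fin 3)) (r : ℝ) :
    Set (EuclideanSpace ℝ (Fin 3)) :=
  {x | x ∈ Metric.sphere (0 : EuclideanSpace ℝ (Fin 3)) 1 ∧ sphDist z x ≤ r}

/-- The interior (open spherical disk) of the spherical disk with center `z`, radius `r`. -/
noncomputable def sphDiskInt (z : EuclideanSpace ℝ (Fin 3)) (r : ℝ) :
    Set (EuclideanSpace ℝ (Fin 3)) :=
  {x | x ∈ Metric.sphere (0 : EuclideanSpace ℝ (Fin 3)) 1 ∧ sphDist z x < r}

namespace TripleAux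

abbrev F3 := EuclideanSpace ℝ (Fin 3) × ℝ

noncomputable def bf (u w : F3) : ℝ := ⟪u.1, w.1⟫ - u.2 * w.2

lemma bf_symm (u w : F3) : bf u w = bf w u := by
  simp [bf, real_inner_comm, mul_comm]

lemma bf_add_left (u v w : F3) : bf (u + v) w = bf u w + bf v w := by
  unfold bf
  rw [Prod.fst_add, Prod.snd_add, inner_add_left]; ring

lemma bf_smul_left (c : ℝ) (u w : F3) : bf (c • u) w = c * bf u w := by
  unfold bf
  rw [Prod.smul_fst, Prod.smul_snd, real_inner_smul_left, smul_eq_mul]; ring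

lemma bf_add_right (u v w : F3) : bf u (v + w) = bf u v + bf u w := by
  rw [bf_symm, bf_add_left, bf_symm v u, bf_symm w u]

lemma bf_smul_right (c : ℝ) (u w : F3) : bf u (c • w) = c * bf u w := by
  rw [bf_symm, bf_smul_left, bf_symm]

lemma bf_zero_left (w : F3) : bf 0 w = 0 := by simp [bf]

lemma bf_sub_left (u v w : F3) : bf (u - v) w = bf u w - bf v w := by
  unfold bf
  rw [Prod.fst_sub, Prod.snd_sub, inner_sub_left]; ring

lemma bf_sub_right (u v w : F3) : bf u (v - w) = bf u v - bf u w := by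
  rw [bf_symm, bf_sub_left, bf_symm v u, bf_symm w u]

lemma rep4 (v : Fin 4 → F3) (hv : LinearIndependent ℝ v) (w : F3) :
    ∃ c : Fin 4 → ℝ, w = c 0 • v 0 + c 1 • v 1 + c 2 • v 2 + c 3 • v 3 := by
  have hrank : Module.finrank ℝ F3 = 4 := by
    simp [Module.finrank_prod]
  have hsp : Submodule.span ℝ (Set.range v) = ⊤ := by
    apply Submodule.eq_top_of_finrank_eq
    rw [finrank_span_eq_card hv, hrank]; simp
  have hw : w ∈ Submodule.span ℝ (Set.range v) := by rw [hsp]; trivial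
  rw [Finsupp.mem_span_range_iff_exists_finsupp] at hw
  obtain ⟨c, hc⟩ := hw
  refine ⟨c, ?_⟩
  rw [← hc, Finsupp.sum_fintype _ _ (by simp)]
  rw [Fin.sum_univ_four]

section Gram

variable (v1 v2 v3 : F3) (g11 g12 g13 g22 g23 g33 : ℝ)

/-- Regularity of a 3×3 symmetric system with nonzero determinant. -/
lemma gram_reg
    (hd : g11 * (g22*g33 - g23*g23) - g12 * (g12*g33 - g13*g23)
        + g13 * (g12*g23 - g13*g22) ≠ 0)
    (c1 c2 c3 : ℝ)
    (L1 : c1 * g11 + c2 * g12 + c3 * g13 = 0)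
    (L2 : c1 * g12 + c2 * g22 + c3 * g23 = 0)
    (L3 : c1 * g13 + c2 * g23 + c3 * g33 = 0) :
    c1 = 0 ∧ c2 = 0 ∧ c3 = 0 := by
  set d := g11 * (g22*g33 - g23*g23) - g12 * (g12*g33 - g13*g23)
        + g13 * (g12*g23 - g13*g22) with hddef
  have h1 : d * c1 = 0 := by
    rw [hddef]
    linear_combination (g22*g33 - g23*g23) * L1 + (g13*g23 - g12*g33) * L2
      + (g12*g23 - g13*g22) * L3
  have h2 : d * c2 = 0 := by
    rw [hddef]
    linear_combination (g13*g23 - g12*g33) * L1 + (g11*g33 - g13*g13) * L2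
      + (g12*g13 - g11*g23) * L3
  have h3 : d * c3 = 0 := by
    rw [hddef]
    linear_combination (g12*g23 - g13*g22) * L1 + (g12*g13 - g11*g23) * L2
      + (g11*g22 - g12*g12) * L3
  refine ⟨?_, ?_, ?_⟩ <;>
    [exact (mul_eq_zero.mp h1).resolve_left hd;
     exact (mul_eq_zero.mp h2).resolve_left hd;
     exact (mul_eq_zero.mp h3).resolve_left hd]

variable (h : F3)

lemma indep4
    (hg11 : bf v1 v1 = g11) (hg12 : bf v1 v2 = g12) (hg13 : bf v1 v3 = g13)
    (hg22 : bf v2 v2 = g22) (hg23 : bf v2 v3 = g23) (hg33 : bf v3 v3 = g33)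
    (hd : g11 * (g22*g33 - g23*g23) - g12 * (g12*g33 - g13*g23)
        + g13 * (g12*g23 - g13*g22) ≠ 0)
    (o1 : bf v1 h = 0) (o2 : bf v2 h = 0) (o3 : bf v3 h = 0) (hh : h ≠ 0) :
    LinearIndependent ℝ ![v1, v2, v3, h] := by
  rw [Fintype.linearIndependent_iff]
  intro c hc
  rw [Fin.sum_univ_four] at hc
  simp only [Matrix.cons_val_zero, Matrix.cons_val_one, Matrix.head_cons,
    Matrix.cons_val_two, Matrix.tail_cons, Matrix.cons_val_three] at hc
  have key : ∀ u : F3, bf u (c 0 • v1 + c 1 • v2 + c 2 • v3 + c 3 • h) =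
      c 0 * bf u v1 + c 1 * bf u v2 + c 2 * bf u v3 + c 3 * bf u h := by
    intro u
    rw [bf_add_right, bf_add_right, bf_add_right, bf_smul_right, bf_smul_right,
      bf_smul_right, bf_smul_right]
  have L1 := key v1
  have L2 := key v2
  have L3 := key v3
  rw [hc] at L1 L2 L3
  rw [bf_symm v1 0] at L1; rw [bf_symm v2 0] at L2; rw [bf_symm v3 0] at L3
  rw [bf_zero_left] at L1 L2 L3
  rw [hg11, hg12, hg13, o1] at L1
  rw [bf_symm v2 v1, hg12] at L2; rw [hg22, hg23, o2] at L2
  rw [bf_symm v3 v1, hg13, bf_symm v3 v2, hg23, hg33, o3] at L3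
  have e1 : c 0 * g11 + c 1 * g12 + c 2 * g13 = 0 := by linarith
  have e2 : c 0 * g12 + c 1 * g22 + c 2 * g23 = 0 := by linarith
  have e3 : c 0 * g13 + c 1 * g23 + c 2 * g33 = 0 := by linarith
  obtain ⟨hc0, hc1, hc2⟩ := gram_reg g11 g12 g13 g22 g23 g33 hd _ _ _ e1 e2 e3
  have hc3 : c 3 • h = 0 := by
    rw [hc0, hc1, hc2] at hc
    simpa using hc
  have hc3' : c 3 = 0 := by
    rcases smul_eq_zero.mp hc3 with h' | h'
    · exact h'
    · exact absurd h' hh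
  intro i
  fin_cases i <;> assumption

/-- Every vector orthogonal to `v1, v2, v3` is a multiple of a fixed
nonzero orthogonal vector `h`. -/
lemma orth_rep
    (hg11 : bf v1 v1 = g11) (hg12 : bf v1 v2 = g12) (hg13 : bf v1 v3 = g13)
    (hg22 : bf v2 v2 = g22) (hg23 : bf v2 v3 = g23) (hg33 : bf v3 v3 = g33)
    (hd : g11 * (g22*g33 - g23*g23) - g12 * (g12*g33 - g13*g23)
        + g13 * (g12*g23 - g13*g22) ≠ 0)
    (o1 : bf v1 h = 0) (o2 : bf v2 h = 0) (o3 : bf v3 h = 0) (hh : h ≠ 0)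
    (w : F3) (w1 : bf v1 w = 0) (w2 : bf v2 w = 0) (w3 : bf v3 w = 0) :
    ∃ μ : ℝ, w = μ • h := by
  have hind := indep4 v1 v2 v3 g11 g12 g13 g22 g23 g33 h
    hg11 hg12 hg13 hg22 hg23 hg33 hd o1 o2 o3 hh
  obtain ⟨c, hc⟩ := rep4 ![v1, v2, v3, h] hind w
  simp only [Matrix.cons_val_zero, Matrix.cons_val_one, Matrix.head_cons,
    Matrix.cons_val_two, Matrix.tail_cons, Matrix.cons_val_three] at hc
  have key : ∀ u : F3, bf u w =
      c 0 * bf u v1 + c 1 * bf u v2 + c 2 * bf u v3 + c 3 * bf u h := by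
    intro u
    rw [hc, bf_add_right, bf_add_right, bf_add_right, bf_smul_right, bf_smul_right,
      bf_smul_right, bf_smul_right]
  have L1 := key v1; have L2 := key v2; have L3 := key v3
  rw [w1, hg11, hg12, hg13, o1] at L1
  rw [w2, bf_symm v2 v1, hg12, hg22, hg23, o2] at L2
  rw [w3, bf_symm v3 v1, hg13, bf_symm v3 v2, hg23, hg33, o3] at L3
  have e1 : c 0 * g11 + c 1 * g12 + c 2 * g13 = 0 := by linarith
  have e2 : c 0 * g12 + c 1 * g22 + c 2 * g23 = 0 := by linarith
  have e3 : c 0 * g13 + c 1 * g23 + c 2 * g33 = 0 := by linarith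
  obtain ⟨hc0, hc1, hc2⟩ := gram_reg g11 g12 g13 g22 g23 g33 hd _ _ _ e1 e2 e3
  refine ⟨c 3, ?_⟩
  rw [hc, hc0, hc1, hc2]
  simp

end Gram

lemma trig1 {a b c : ℝ} (ha : 0 ≤ a) (hb : 0 ≤ b) (hc : 0 ≤ c)
    (hsum : a + b + c < π) : sin b * sin c < cos a + cos b * cos c := by
  have h1 : cos (π - (b + c)) < cos a := by
    apply cos_lt_cos_of_nonneg_of_le_pi ha (by linarith)
    linarith
  rw [cos_pi_sub, cos_add] at h1
  linarith

lemma det_neg {a b c : ℝ} (ha : 0 ≤ a) (hb : 0 ≤ b) (hc : 0 ≤ c)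
    (ha' : a < π) (hb' : b < π) (hc' : c < π) (hsum : a + b + c < π) :
    1 - cos a ^ 2 - cos b ^ 2 - cos c ^ 2 - 2 * cos a * cos b * cos c < 0 := by
  have h1 : sin b * sin c < cos a + cos b * cos c := trig1 ha hb hc hsum
  have hsb : 0 ≤ sin b := sin_nonneg_of_nonneg_of_le_pi hb hb'.le
  have hsc : 0 ≤ sin c := sin_nonneg_of_nonneg_of_le_pi hc hc'.le
  have h2 : 0 < cos a + cos b * cos c + sin b * sin c := by nlinarith
  have pb : sin b ^ 2 = 1 - cos b ^ 2 := sin_sq b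
  have pc : sin c ^ 2 = 1 - cos c ^ 2 := sin_sq c
  nlinarith [mul_pos (by linarith : (0:ℝ) < cos a + cos b * cos c - sin b * sin c) h2]

lemma revCS {X Y Z a b : ℝ} (hX : 0 ≤ X) (hY : 0 ≤ Y) (hZ : Z ^ 2 ≤ X * Y)
    (hXa : X ≤ a ^ 2) (hYb : Y ≤ b ^ 2) :
    (X - a ^ 2) * (Y - b ^ 2) ≤ (Z - a * b) ^ 2 := by
  rcases eq_or_lt_of_le hX with hX0 | hX0
  · have hZ0 : Z = 0 := by nlinarith
    rw [hZ0, ← hX0]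
    nlinarith [sq_nonneg a, sq_nonneg b]
  · have key : X * ((Z - a * b) ^ 2 - (X - a ^ 2) * (Y - b ^ 2)) =
        (b * X - a * Z) ^ 2 + (X * Y - Z ^ 2) * (a ^ 2 - X) := by ring
    nlinarith [sq_nonneg (b * X - a * Z), mul_nonneg (by linarith : (0:ℝ) ≤ X * Y - Z ^ 2) (by linarith : (0:ℝ) ≤ a ^ 2 - X)]

variable (v1 v2 v3 : F3) (g11 g12 g13 g22 g23 g33 : ℝ)

/-- A null vector orthogonal to a nondegenerate triple is zero. -/
lemma orth_null_eq_zero (p : F3)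
    (hg11 : bf v1 v1 = g11) (hg12 : bf v1 v2 = g12) (hg13 : bf v1 v3 = g13)
    (hg22 : bf v2 v2 = g22) (hg23 : bf v2 v3 = g23) (hg33 : bf v3 v3 = g33)
    (hd : g11 * (g22*g33 - g23*g23) - g12 * (g12*g33 - g13*g23)
        + g13 * (g12*g23 - g13*g22) ≠ 0)
    (o1 : bf v1 p = 0) (o2 : bf v2 p = 0) (o3 : bf v3 p = 0)
    (hpp : bf p p = 0) : p = 0 := by
  by_cases hp : p = 0
  · exact hp
  exfalso
  have hind := indep4 v1 v2 v3 g11 g12 g13 g22 g23 g33 p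
    hg11 hg12 hg13 hg22 hg23 hg33 hd o1 o2 o3 hp
  obtain ⟨c, hc⟩ := rep4 ![v1, v2, v3, p] hind (p.1, -p.2)
  simp only [Matrix.cons_val_zero, Matrix.cons_val_one, Matrix.head_cons,
    Matrix.cons_val_two, Matrix.tail_cons, Matrix.cons_val_three] at hc
  have h1 : bf p (p.1, -p.2) = 0 := by
    rw [hc, bf_add_right, bf_add_right, bf_add_right, bf_smul_right, bf_smul_right,
      bf_smul_right, bf_smul_right, bf_symm p v1, o1, bf_symm p v2, o2,
      bf_symm p v3, o3, hpp]
    ring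
  have h2 : bf p (p.1, -p.2) = ⟪p.1, p.1⟫ + p.2 * p.2 := by
    simp only [bf]; ring
  rw [h2] at h1
  have hi : (0:ℝ) ≤ ⟪p.1, p.1⟫ := real_inner_self_nonneg
  have hp1 : p.1 = 0 := by
    rw [← inner_self_eq_zero (𝕜 := ℝ)]
    nlinarith [sq_nonneg p.2]
  have hp2 : p.2 = 0 := by nlinarith
  exact hp (Prod.ext hp1 hp2)
lemma quadEE {A11 A22 A33 A12 A13 A23 e1 e2 e3 : ℝ}
    (hA11 : 0 ≤ A11) (hA22 : 0 ≤ A22) (hA33 : 0 ≤ A33)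
    (hA12 : 0 ≤ A12) (hA13 : 0 ≤ A13) (hA23 : 0 ≤ A23)
    (h1 : 0 ≤ e1) (h2 : 0 ≤ e2) (h3 : 0 ≤ e3) :
    0 ≤ (A11 * e1 + A12 * e2 + A13 * e3) * e1 + (A12 * e1 + A22 * e2 + A23 * e3) * e2
      + (A13 * e1 + A23 * e2 + A33 * e3) * e3 := by
  nlinarith [mul_nonneg hA11 (mul_nonneg h1 h1), mul_nonneg hA22 (mul_nonneg h2 h2),
    mul_nonneg hA33 (mul_nonneg h3 h3), mul_nonneg hA12 (mul_nonneg h1 h2),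
    mul_nonneg hA13 (mul_nonneg h1 h3), mul_nonneg hA23 (mul_nonneg h2 h3)]

lemma quadEF {A11 A22 A33 A12 A13 A23 e1 e2 e3 f1 f2 f3 : ℝ}
    (hA11 : 0 ≤ A11) (hA22 : 0 ≤ A22) (hA33 : 0 ≤ A33)
    (hA12 : 0 ≤ A12) (hA13 : 0 ≤ A13) (hA23 : 0 ≤ A23)
    (h1 : 0 ≤ e1) (h2 : 0 ≤ e2) (h3 : 0 ≤ e3)
    (k1 : f1 ≤ 0) (k2 : f2 ≤ 0) (k3 : f3 ≤ 0) :
    (A11 * e1 + A12 * e2 + A13 * e3) * f1 + (A12 * e1 + A22 * e2 + A23 * e3) * f2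
      + (A13 * e1 + A23 * e2 + A33 * e3) * f3 ≤ 0 := by
  nlinarith [mul_nonneg hA11 (mul_nonneg h1 (neg_nonneg.2 k1)),
    mul_nonneg hA22 (mul_nonneg h2 (neg_nonneg.2 k2)),
    mul_nonneg hA33 (mul_nonneg h3 (neg_nonneg.2 k3)),
    mul_nonneg hA12 (mul_nonneg h1 (neg_nonneg.2 k2)),
    mul_nonneg hA12 (mul_nonneg h2 (neg_nonneg.2 k1)),
    mul_nonneg hA13 (mul_nonneg h1 (neg_nonneg.2 k3)),
    mul_nonneg hA13 (mul_nonneg h3 (neg_nonneg.2 k1)),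
    mul_nonneg hA23 (mul_nonneg h2 (neg_nonneg.2 k3)),
    mul_nonneg hA23 (mul_nonneg h3 (neg_nonneg.2 k2))]

lemma quadFF {A11 A22 A33 A12 A13 A23 f1 f2 f3 : ℝ}
    (hA11 : 0 ≤ A11) (hA22 : 0 ≤ A22) (hA33 : 0 ≤ A33)
    (hA12 : 0 ≤ A12) (hA13 : 0 ≤ A13) (hA23 : 0 ≤ A23)
    (k1 : f1 ≤ 0) (k2 : f2 ≤ 0) (k3 : f3 ≤ 0) :
    0 ≤ (A11 * f1 + A12 * f2 + A13 * f3) * f1 + (A12 * f1 + A22 * f2 + A23 * f3) * f2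
      + (A13 * f1 + A23 * f2 + A33 * f3) * f3 := by
  nlinarith [mul_nonneg hA11 (mul_nonneg (neg_nonneg.2 k1) (neg_nonneg.2 k1)),
    mul_nonneg hA22 (mul_nonneg (neg_nonneg.2 k2) (neg_nonneg.2 k2)),
    mul_nonneg hA33 (mul_nonneg (neg_nonneg.2 k3) (neg_nonneg.2 k3)),
    mul_nonneg hA12 (mul_nonneg (neg_nonneg.2 k1) (neg_nonneg.2 k2)),
    mul_nonneg hA13 (mul_nonneg (neg_nonneg.2 k1) (neg_nonneg.2 k3)),
    mul_nonneg hA23 (mul_nonneg (neg_nonneg.2 k2) (neg_nonneg.2 k3))]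

lemma add_nonneg_of_sq_le {C m : ℝ} (hC : 0 ≤ C) (hm : m * m ≤ C ^ 2) :
    0 ≤ C + m := by nlinarith

/-- The key Lorentz-space positivity: if `p, q` are null vectors with nonnegative
pairings against `v1,v2,v3` for `p` and nonpositive for `q`, and the Gram matrix of
the `v`'s has negative determinant with nonnegative adjugate entries, then
`0 ≤ bf p q`. -/
lemma core_pos (p q : F3) (e1 e2 e3 f1 f2 f3 : ℝ)
    (hg11 : bf v1 v1 = g11) (hg12 : bf v1 v2 = g12) (hg13 : bf v1 v3 = g13)
    (hg22 : bf v2 v2 = g22) (hg23 : bf v2 v3 = g23) (hg33 : bf v3 v3 = g33)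
    (he1 : bf v1 p = e1) (he2 : bf v2 p = e2) (he3 : bf v3 p = e3)
    (hf1 : bf v1 q = f1) (hf2 : bf v2 q = f2) (hf3 : bf v3 q = f3)
    (hpp : bf p p = 0) (hqq : bf q q = 0)
    (hd : g11 * (g22*g33 - g23*g23) - g12 * (g12*g33 - g13*g23)
        + g13 * (g12*g23 - g13*g22) < 0)
    (hA11 : 0 ≤ g22*g33 - g23*g23) (hA22 : 0 ≤ g11*g33 - g13*g13)
    (hA33 : 0 ≤ g11*g22 - g12*g12)
    (hA12 : 0 ≤ g13*g23 - g12*g33) (hA13 : 0 ≤ g12*g23 - g13*g22)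
    (hA23 : 0 ≤ g12*g13 - g11*g23)
    (he1' : 0 ≤ e1) (he2' : 0 ≤ e2) (he3' : 0 ≤ e3)
    (hf1' : f1 ≤ 0) (hf2' : f2 ≤ 0) (hf3' : f3 ≤ 0) :
    0 ≤ bf p q := by
  set u1 := (g22*g33 - g23*g23) * e1 + (g13*g23 - g12*g33) * e2
      + (g12*g23 - g13*g22) * e3 with hu1
  set u2 := (g13*g23 - g12*g33) * e1 + (g11*g33 - g13*g13) * e2
      + (g12*g13 - g11*g23) * e3 with hu2
  set u3 := (g12*g23 - g13*g22) * e1 + (g12*g13 - g11*g23) * e2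
      + (g11*g22 - g12*g12) * e3 with hu3
  set w1 := (g22*g33 - g23*g23) * f1 + (g13*g23 - g12*g33) * f2
      + (g12*g23 - g13*g22) * f3 with hw1
  set w2 := (g13*g23 - g12*g33) * f1 + (g11*g33 - g13*g13) * f2
      + (g12*g13 - g11*g23) * f3 with hw2
  set w3 := (g12*g23 - g13*g22) * f1 + (g12*g13 - g11*g23) * f2
      + (g11*g22 - g12*g12) * f3 with hw3
  set d := g11 * (g22*g33 - g23*g23) - g12 * (g12*g33 - g13*g23)
      + g13 * (g12*g23 - g13*g22) with hdd
  have hd0 : d ≠ 0 := ne_of_lt hd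
  have hdd2 : 0 < d * d := mul_pos_of_neg_of_neg hd hd
  set P := u1 • v1 + u2 • v2 + u3 • v3 with hP
  set Q := w1 • v1 + w2 • v2 + w3 • v3 with hQ
  set h := d • p - P with hhdef
  set h' := d • q - Q with hh'def
  have expP : ∀ u : F3, bf u P = u1 * bf u v1 + u2 * bf u v2 + u3 * bf u v3 := by
    intro u
    rw [hP, bf_add_right, bf_add_right, bf_smul_right, bf_smul_right, bf_smul_right]
  have expQ : ∀ u : F3, bf u Q = w1 * bf u v1 + w2 * bf u v2 + w3 * bf u v3 := by
    intro u
    rw [hQ, bf_add_right, bf_add_right, bf_smul_right, bf_smul_right, bf_smul_right]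
  have bv1P : bf v1 P = d * e1 := by
    rw [expP v1, hg11, hg12, hg13, hu1, hu2, hu3, hdd]; ring
  have bv2P : bf v2 P = d * e2 := by
    rw [expP v2, bf_symm v2 v1, hg12, hg22, hg23, hu1, hu2, hu3, hdd]; ring
  have bv3P : bf v3 P = d * e3 := by
    rw [expP v3, bf_symm v3 v1, hg13, bf_symm v3 v2, hg23, hg33, hu1, hu2, hu3, hdd]
    ring
  have bv1Q : bf v1 Q = d * f1 := by
    rw [expQ v1, hg11, hg12, hg13, hw1, hw2, hw3, hdd]; ring
  have bv2Q : bf v2 Q = d * f2 := by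
    rw [expQ v2, bf_symm v2 v1, hg12, hg22, hg23, hw1, hw2, hw3, hdd]; ring
  have bv3Q : bf v3 Q = d * f3 := by
    rw [expQ v3, bf_symm v3 v1, hg13, bf_symm v3 v2, hg23, hg33, hw1, hw2, hw3, hdd]
    ring
  -- orthogonality of the remainders
  have o1 : bf v1 h = 0 := by
    rw [hhdef, bf_sub_right, bf_smul_right, he1, bv1P]; ring
  have o2 : bf v2 h = 0 := by
    rw [hhdef, bf_sub_right, bf_smul_right, he2, bv2P]; ring
  have o3 : bf v3 h = 0 := by
    rw [hhdef, bf_sub_right, bf_smul_right, he3, bv3P]; ring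
  have o1' : bf v1 h' = 0 := by
    rw [hh'def, bf_sub_right, bf_smul_right, hf1, bv1Q]; ring
  have o2' : bf v2 h' = 0 := by
    rw [hh'def, bf_sub_right, bf_smul_right, hf2, bv2Q]; ring
  have o3' : bf v3 h' = 0 := by
    rw [hh'def, bf_sub_right, bf_smul_right, hf3, bv3Q]; ring
  -- pairings of p, q with P, Q
  have hpP : bf p P = u1 * e1 + u2 * e2 + u3 * e3 := by
    rw [expP p, bf_symm p v1, he1, bf_symm p v2, he2, bf_symm p v3, he3]
  have hpQ : bf p Q = w1 * e1 + w2 * e2 + w3 * e3 := by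
    rw [expQ p, bf_symm p v1, he1, bf_symm p v2, he2, bf_symm p v3, he3]
  have hqP : bf q P = u1 * f1 + u2 * f2 + u3 * f3 := by
    rw [expP q, bf_symm q v1, hf1, bf_symm q v2, hf2, bf_symm q v3, hf3]
  have hqQ : bf q Q = w1 * f1 + w2 * f2 + w3 * f3 := by
    rw [expQ q, bf_symm q v1, hf1, bf_symm q v2, hf2, bf_symm q v3, hf3]
  have hPP : bf P P = d * (u1 * e1 + u2 * e2 + u3 * e3) := by
    rw [expP P, bf_symm P v1, bv1P, bf_symm P v2, bv2P, bf_symm P v3, bv3P]; ring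
  have hQQ : bf Q Q = d * (w1 * f1 + w2 * f2 + w3 * f3) := by
    rw [expQ Q, bf_symm Q v1, bv1Q, bf_symm Q v2, bv2Q, bf_symm Q v3, bv3Q]; ring
  have hPQ : bf P Q = d * (u1 * f1 + u2 * f2 + u3 * f3) := by
    rw [expQ P, bf_symm P v1, bv1P, bf_symm P v2, bv2P, bf_symm P v3, bv3P,
      hu1, hu2, hu3, hw1, hw2, hw3]
    ring
  have hPQ' : bf P Q = d * (w1 * e1 + w2 * e2 + w3 * e3) := by
    rw [expQ P, bf_symm P v1, bv1P, bf_symm P v2, bv2P, bf_symm P v3, bv3P]; ring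
  -- sign facts for the quadratic forms
  have hNe : 0 ≤ u1 * e1 + u2 * e2 + u3 * e3 := by
    rw [hu1, hu2, hu3]
    exact quadEE hA11 hA22 hA33 hA12 hA13 hA23 he1' he2' he3'
  have hNf : 0 ≤ w1 * f1 + w2 * f2 + w3 * f3 := by
    rw [hw1, hw2, hw3]
    exact quadFF hA11 hA22 hA33 hA12 hA13 hA23 hf1' hf2' hf3'
  have hMef : u1 * f1 + u2 * f2 + u3 * f3 ≤ 0 := by
    rw [hu1, hu2, hu3]
    exact quadEF hA11 hA22 hA33 hA12 hA13 hA23 he1' he2' he3' hf1' hf2' hf3'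
  have hSle : bf P P ≤ 0 := by
    rw [hPP]
    exact mul_nonpos_of_nonpos_of_nonneg (le_of_lt hd) hNe
  have hTle : bf Q Q ≤ 0 := by
    rw [hQQ]
    exact mul_nonpos_of_nonpos_of_nonneg (le_of_lt hd) hNf
  have hCge : 0 ≤ bf P Q := by
    rw [hPQ, show d * (u1 * f1 + u2 * f2 + u3 * f3)
        = (-d) * (-(u1 * f1 + u2 * f2 + u3 * f3)) by ring]
    exact mul_nonneg (neg_nonneg.2 (le_of_lt hd)) (neg_nonneg.2 hMef)
  -- the remainders' self-pairings
  have hhh : bf h h = -bf P P := by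
    rw [hhdef, bf_sub_left, bf_sub_right, bf_sub_right, bf_smul_left, bf_smul_right,
      bf_smul_right, bf_smul_left, hpp, bf_symm P p, hpP, hPP]
    ring
  have hh'h' : bf h' h' = -bf Q Q := by
    rw [hh'def, bf_sub_left, bf_sub_right, bf_sub_right, bf_smul_left, bf_smul_right,
      bf_smul_right, bf_smul_left, hqq, bf_symm Q q, hqQ, hQQ]
    ring
  -- decomposition of d²·bf p q
  have keyEq : d * d * bf p q = bf P Q + bf h h' := by
    have expand : bf h h' = d * d * bf p q - d * bf p Q - d * (bf q P) + bf P Q := by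
      rw [hhdef, hh'def, bf_sub_left, bf_sub_right, bf_sub_right, bf_smul_left,
        bf_smul_right, bf_smul_right, bf_smul_left, bf_symm P q]
      ring
    have huw : d * (u1 * f1 + u2 * f2 + u3 * f3) = d * (w1 * e1 + w2 * e2 + w3 * e3) := by
      rw [← hPQ, ← hPQ']
    rw [expand, hpQ, hqP, hPQ]
    linear_combination huw
  -- Cauchy–Schwarz bound: (bf P P) * (bf Q Q) ≤ (bf P Q)^2
  have hX : (0:ℝ) ≤ ⟪P.1, P.1⟫ := real_inner_self_nonneg
  have hY : (0:ℝ) ≤ ⟪Q.1, Q.1⟫ := real_inner_self_nonneg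
  have hZ : ⟪P.1, Q.1⟫ ^ 2 ≤ ⟪P.1, P.1⟫ * ⟪Q.1, Q.1⟫ := by
    rw [pow_two]
    exact real_inner_mul_inner_self_le P.1 Q.1
  have hSbf : bf P P = ⟪P.1, P.1⟫ - P.2 ^ 2 := by simp only [bf]; ring
  have hTbf : bf Q Q = ⟪Q.1, Q.1⟫ - Q.2 ^ 2 := by simp only [bf]; ring
  have hCbf : bf P Q = ⟪P.1, Q.1⟫ - P.2 * Q.2 := by simp only [bf]
  have hXa : ⟪P.1, P.1⟫ ≤ P.2 ^ 2 := by rw [hSbf] at hSle; linarith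
  have hYb : ⟪Q.1, Q.1⟫ ≤ Q.2 ^ 2 := by rw [hTbf] at hTle; linarith
  have hrev : bf P P * bf Q Q ≤ bf P Q ^ 2 := by
    rw [hSbf, hTbf, hCbf]
    exact revCS hX hY hZ hXa hYb
  -- case analysis on h
  have divtrick : 0 ≤ d * d * bf p q → 0 ≤ bf p q := by
    intro hmul
    have h0 : d * d * 0 ≤ d * d * bf p q := by rw [mul_zero]; exact hmul
    exact le_of_mul_le_mul_left h0 hdd2
  by_cases hz : h = 0
  · have hz' : bf h h' = 0 := by rw [hz, bf_zero_left]
    rw [hz', add_zero] at keyEq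
    exact divtrick (by rw [keyEq]; exact hCge)
  · obtain ⟨μ, hμ⟩ := orth_rep v1 v2 v3 g11 g12 g13 g22 g23 g33 h
      hg11 hg12 hg13 hg22 hg23 hg33 hd0 o1 o2 o3 hz h' o1' o2' o3'
    have hhh' : bf h h' = μ * bf h h := by rw [hμ, bf_smul_right]
    have hh'2 : bf h' h' = μ * (μ * bf h h) := by
      rw [hμ, bf_smul_left, bf_smul_right]
    have hST : bf P P * bf Q Q = (μ * bf h h) * (μ * bf h h) := by
      have e1' : bf P P = -bf h h := by linear_combination hhh
      have e2' : μ * (μ * bf h h) = -bf Q Q := by linear_combination hh'h' - hh'2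
      linear_combination bf Q Q * e1' - bf h h * e2'
    have hmm : (μ * bf h h) * (μ * bf h h) ≤ bf P Q ^ 2 := by rw [← hST]; exact hrev
    have hfinal : 0 ≤ bf P Q + μ * bf h h := add_nonneg_of_sq_le hCge hmm
    rw [← hhh'] at hfinal
    rw [← keyEq] at hfinal
    exact divtrick hfinal
end TripleAux


set_option maxHeartbeats 4000000 in
/-- Lemma 2.7: if three pairwise intersecting disks have exterior intersection angles
summing to less than `π` and the union of their interiors is a proper subset of the
sphere, then the triple intersection is empty. -/
theorem triple_intersection_empty
    (zi zj zk : EuclideanSpace ℝ (Fin 3))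
    (hzi : zi ∈ Metric.sphere (0 : EuclideanSpace ℝ (Fin 3)) 1)
    (hzj : zj ∈ Metric.sphere (0 : EuclideanSpace ℝ (Fin 3)) 1)
    (hzk : zk ∈ Metric.sphere (0 : EuclideanSpace ℝ (Fin 3)) 1)
    (ri rj rk Θi Θj Θk : ℝ)
    (hri : ri ∈ Set.Ioo 0 π) (hrj : rj ∈ Set.Ioo 0 π) (hrk : rk ∈ Set.Ioo 0 π)
    (hΘi : Θi ∈ Set.Ico 0 π) (hΘj : Θj ∈ Set.Ico 0 π) (hΘk : Θk ∈ Set.Ico 0 π)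
    -- exterior intersection angles: `Θ_i` for the pair `(D_j, D_k)`, etc.
    (hij : cos (sphDist zi zj) = cos ri * cos rj - cos Θk * sin ri * sin rj)
    (hjk : cos (sphDist zj zk) = cos rj * cos rk - cos Θi * sin rj * sin rk)
    (hki : cos (sphDist zk zi) = cos rk * cos ri - cos Θj * sin rk * sin ri)
    -- the disks pairwise intersect
    (hmij : (sphDisk zi ri ∩ sphDisk zj rj).Nonempty)
    (hmjk : (sphDisk zj rj ∩ sphDisk zk rk).Nonempty)
    (hmki : (sphDisk zk rk ∩ sphDisk zi ri).Nonempty)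
    -- the union of the open disks is a proper subset of the sphere
    (hproper : sphDiskInt zi ri ∪ sphDiskInt zj rj ∪ sphDiskInt zk rk
        ⊂ Metric.sphere (0 : EuclideanSpace ℝ (Fin 3)) 1)
    (hsum : Θi + Θj + Θk < π) :
    sphDisk zi ri ∩ sphDisk zj rj ∩ sphDisk zk rk = ∅ := by
  by_contra hne
  obtain ⟨x, hx⟩ := Set.nonempty_iff_ne_empty.2 hne
  obtain ⟨⟨hxi, hxj⟩, hxk⟩ := hx
  obtain ⟨hxsph, hxdi⟩ := hxi
  obtain ⟨-, hxdj⟩ := hxj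
  obtain ⟨-, hxdk⟩ := hxk
  -- a point not covered by the open disks
  obtain ⟨y, hysph, hyn⟩ := Set.exists_of_ssubset hproper
  have hyni : y ∉ sphDiskInt zi ri := fun h => hyn (Or.inl (Or.inl h))
  have hynj : y ∉ sphDiskInt zj rj := fun h => hyn (Or.inl (Or.inr h))
  have hynk : y ∉ sphDiskInt zk rk := fun h => hyn (Or.inr h)
  -- norms
  have nzi : ‖zi‖ = 1 := mem_sphere_zero_iff_norm.mp hzi
  have nzj : ‖zj‖ = 1 := mem_sphere_zero_iff_norm.mp hzj
  have nzk : ‖zk‖ = 1 := mem_sphere_zero_iff_norm.mp hzk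
  have nx : ‖x‖ = 1 := mem_sphere_zero_iff_norm.mp hxsph
  have ny : ‖y‖ = 1 := mem_sphere_zero_iff_norm.mp hysph
  have ibd : ∀ u w : EuclideanSpace ℝ (Fin 3), ‖u‖ = 1 → ‖w‖ = 1 →
      -1 ≤ ⟪u, w⟫ ∧ ⟪u, w⟫ ≤ 1 := by
    intro u w hu hw
    have := abs_real_inner_le_norm u w
    rw [hu, hw] at this
    constructor <;> [linarith [neg_abs_le (⟪u, w⟫ : ℝ)]; linarith [le_abs_self (⟪u, w⟫ : ℝ)]]
  -- lower bounds on inner products with x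
  have hxlow : ∀ z r, ‖z‖ = 1 → sphDist z x ≤ r → r < π → cos r ≤ ⟪z, x⟫ := by
    intro z r hz hd hrπ
    have hb := ibd z x hz nx
    have h1 : Real.arccos ⟪z, x⟫ ≤ r := hd
    have h2 := Real.cos_le_cos_of_nonneg_of_le_pi (Real.arccos_nonneg _) (le_of_lt hrπ) h1
    rwa [Real.cos_arccos hb.1 hb.2] at h2
  have exi : cos ri ≤ ⟪zi, x⟫ := hxlow zi ri nzi hxdi hri.2
  have exj : cos rj ≤ ⟪zj, x⟫ := hxlow zj rj nzj hxdj hrj.2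
  have exk : cos rk ≤ ⟪zk, x⟫ := hxlow zk rk nzk hxdk hrk.2
  -- upper bounds on inner products with y
  have hyup : ∀ z r, ‖z‖ = 1 → y ∉ sphDiskInt z r → 0 < r → ⟪z, y⟫ ≤ cos r := by
    intro z r hz hmem hr0
    have hb := ibd z y hz ny
    have h1 : r ≤ sphDist z y := by
      by_contra hlt
      exact hmem ⟨hysph, by linarith⟩
    have h2 := Real.cos_le_cos_of_nonneg_of_le_pi (le_of_lt hr0) (Real.arccos_le_pi _) h1
    rwa [Real.cos_arccos hb.1 hb.2] at h2
  have fyi : ⟪zi, y⟫ ≤ cos ri := hyup zi ri nzi hyni hri.1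
  have fyj : ⟪zj, y⟫ ≤ cos rj := hyup zj rj nzj hynj hrj.1
  have fyk : ⟪zk, y⟫ ≤ cos rk := hyup zk rk nzk hynk hrk.1
  -- inner products between centers
  have gij : ⟪zi, zj⟫ = cos ri * cos rj - cos Θk * sin ri * sin rj := by
    have hb := ibd zi zj nzi nzj
    rw [sphDist, Real.cos_arccos hb.1 hb.2] at hij
    exact hij
  have gjk : ⟪zj, zk⟫ = cos rj * cos rk - cos Θi * sin rj * sin rk := by
    have hb := ibd zj zk nzj nzk
    rw [sphDist, Real.cos_arccos hb.1 hb.2] at hjk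
    exact hjk
  have gki : ⟪zk, zi⟫ = cos rk * cos ri - cos Θj * sin rk * sin ri := by
    have hb := ibd zk zi nzk nzi
    rw [sphDist, Real.cos_arccos hb.1 hb.2] at hki
    exact hki
  -- self inner products
  have gii : ⟪zi, zi⟫ = 1 := by rw [real_inner_self_eq_norm_sq, nzi]; norm_num
  have gjj : ⟪zj, zj⟫ = 1 := by rw [real_inner_self_eq_norm_sq, nzj]; norm_num
  have gkk : ⟪zk, zk⟫ = 1 := by rw [real_inner_self_eq_norm_sq, nzk]; norm_num
  have gxx : ⟪x, x⟫ = 1 := by rw [real_inner_self_eq_norm_sq, nx]; norm_num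
  have gyy : ⟪y, y⟫ = 1 := by rw [real_inner_self_eq_norm_sq, ny]; norm_num
  -- positivity of sines
  have si : 0 < sin ri := Real.sin_pos_of_pos_of_lt_pi hri.1 hri.2
  have sj : 0 < sin rj := Real.sin_pos_of_pos_of_lt_pi hrj.1 hrj.2
  have sk : 0 < sin rk := Real.sin_pos_of_pos_of_lt_pi hrk.1 hrk.2
  have sΘi : 0 ≤ sin Θi := Real.sin_nonneg_of_nonneg_of_le_pi hΘi.1 hΘi.2.le
  have sΘj : 0 ≤ sin Θj := Real.sin_nonneg_of_nonneg_of_le_pi hΘj.1 hΘj.2.le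
  have sΘk : 0 ≤ sin Θk := Real.sin_nonneg_of_nonneg_of_le_pi hΘk.1 hΘk.2.le
  -- trigonometric positivity facts
  have keyi : 0 ≤ cos Θi + cos Θj * cos Θk := by
    have h1 := TripleAux.trig1 hΘi.1 hΘj.1 hΘk.1 hsum
    have h2 := mul_nonneg sΘj sΘk
    linarith
  have keyj : 0 ≤ cos Θj + cos Θi * cos Θk := by
    have h1 := TripleAux.trig1 hΘj.1 hΘi.1 hΘk.1 (by linarith)
    have h2 := mul_nonneg sΘi sΘk
    linarith
  have keyk : 0 ≤ cos Θk + cos Θi * cos Θj := by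
    have h1 := TripleAux.trig1 hΘk.1 hΘi.1 hΘj.1 (by linarith)
    have h2 := mul_nonneg sΘi sΘj
    linarith
  have hdetM := TripleAux.det_neg hΘi.1 hΘj.1 hΘk.1 hΘi.2 hΘj.2 hΘk.2 hsum
  -- the Lorentz vectors
  set v1 : TripleAux.F3 := (zi, cos ri) with hv1
  set v2 : TripleAux.F3 := (zj, cos rj) with hv2
  set v3 : TripleAux.F3 := (zk, cos rk) with hv3
  set p : TripleAux.F3 := (x, 1) with hp
  set q : TripleAux.F3 := (y, 1) with hq
  -- Gram entries
  have hg11 : TripleAux.bf v1 v1 = sin ri * sin ri := by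
    show ⟪zi, zi⟫ - cos ri * cos ri = sin ri * sin ri
    linear_combination gii - Real.sin_sq_add_cos_sq ri
  have hg22 : TripleAux.bf v2 v2 = sin rj * sin rj := by
    show ⟪zj, zj⟫ - cos rj * cos rj = sin rj * sin rj
    linear_combination gjj - Real.sin_sq_add_cos_sq rj
  have hg33 : TripleAux.bf v3 v3 = sin rk * sin rk := by
    show ⟪zk, zk⟫ - cos rk * cos rk = sin rk * sin rk
    linear_combination gkk - Real.sin_sq_add_cos_sq rk
  have hg12 : TripleAux.bf v1 v2 = -(cos Θk * (sin ri * sin rj)) := by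
    show ⟪zi, zj⟫ - cos ri * cos rj = -(cos Θk * (sin ri * sin rj))
    rw [gij]; ring
  have hg13 : TripleAux.bf v1 v3 = -(cos Θj * (sin ri * sin rk)) := by
    show ⟪zi, zk⟫ - cos ri * cos rk = -(cos Θj * (sin ri * sin rk))
    rw [real_inner_comm, gki]; ring
  have hg23 : TripleAux.bf v2 v3 = -(cos Θi * (sin rj * sin rk)) := by
    show ⟪zj, zk⟫ - cos rj * cos rk = -(cos Θi * (sin rj * sin rk))
    rw [gjk]; ring
  -- shorthand for Gram entries
  set g11 := sin ri * sin ri with hg11d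
  set g22 := sin rj * sin rj with hg22d
  set g33 := sin rk * sin rk with hg33d
  set g12 := -(cos Θk * (sin ri * sin rj)) with hg12d
  set g13 := -(cos Θj * (sin ri * sin rk)) with hg13d
  set g23 := -(cos Θi * (sin rj * sin rk)) with hg23d
  -- determinant negative
  have hd : g11 * (g22*g33 - g23*g23) - g12 * (g12*g33 - g13*g23)
      + g13 * (g12*g23 - g13*g22) < 0 := by
    rw [hg11d, hg22d, hg33d, hg12d, hg13d, hg23d]
    have hfac : sin ri * sin ri * (sin rj * sin rj * (sin rk * sin rk)
          - -(cos Θi * (sin rj * sin rk)) * -(cos Θi * (sin rj * sin rk)))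
        - -(cos Θk * (sin ri * sin rj)) * (-(cos Θk * (sin ri * sin rj)) * (sin rk * sin rk)
          - -(cos Θj * (sin ri * sin rk)) * -(cos Θi * (sin rj * sin rk)))
        + -(cos Θj * (sin ri * sin rk)) * (-(cos Θk * (sin ri * sin rj)) * -(cos Θi * (sin rj * sin rk))
          - -(cos Θj * (sin ri * sin rk)) * (sin rj * sin rj))
        = (sin ri * sin rj * sin rk)^2 * (1 - cos Θi ^ 2 - cos Θj ^ 2 - cos Θk ^ 2
          - 2 * cos Θi * cos Θj * cos Θk) := by ring
    rw [hfac]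
    exact mul_neg_of_pos_of_neg (by positivity) hdetM
  -- adjugate entries nonnegative
  have hA11 : 0 ≤ g22*g33 - g23*g23 := by
    rw [hg22d, hg33d, hg23d]
    have : sin rj * sin rj * (sin rk * sin rk)
        - -(cos Θi * (sin rj * sin rk)) * -(cos Θi * (sin rj * sin rk))
        = (sin rj * sin rk)^2 * (1 - cos Θi ^ 2) := by ring
    rw [this, ← Real.sin_sq]
    positivity
  have hA22 : 0 ≤ g11*g33 - g13*g13 := by
    rw [hg11d, hg33d, hg13d]
    have : sin ri * sin ri * (sin rk * sin rk)
        - -(cos Θj * (sin ri * sin rk)) * -(cos Θj * (sin ri * sin rk))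
        = (sin ri * sin rk)^2 * (1 - cos Θj ^ 2) := by ring
    rw [this, ← Real.sin_sq]
    positivity
  have hA33 : 0 ≤ g11*g22 - g12*g12 := by
    rw [hg11d, hg22d, hg12d]
    have : sin ri * sin ri * (sin rj * sin rj)
        - -(cos Θk * (sin ri * sin rj)) * -(cos Θk * (sin ri * sin rj))
        = (sin ri * sin rj)^2 * (1 - cos Θk ^ 2) := by ring
    rw [this, ← Real.sin_sq]
    positivity
  have hA12 : 0 ≤ g13*g23 - g12*g33 := by
    rw [hg33d, hg12d, hg13d, hg23d]
    have : -(cos Θj * (sin ri * sin rk)) * -(cos Θi * (sin rj * sin rk))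
        - -(cos Θk * (sin ri * sin rj)) * (sin rk * sin rk)
        = (sin ri * sin rj * (sin rk * sin rk)) * (cos Θk + cos Θi * cos Θj) := by ring
    rw [this]
    exact mul_nonneg (by positivity) keyk
  have hA13 : 0 ≤ g12*g23 - g13*g22 := by
    rw [hg22d, hg12d, hg13d, hg23d]
    have : -(cos Θk * (sin ri * sin rj)) * -(cos Θi * (sin rj * sin rk))
        - -(cos Θj * (sin ri * sin rk)) * (sin rj * sin rj)
        = (sin ri * (sin rj * sin rj) * sin rk) * (cos Θj + cos Θi * cos Θk) := by ring
    rw [this]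
    exact mul_nonneg (by positivity) keyj
  have hA23 : 0 ≤ g12*g13 - g11*g23 := by
    rw [hg11d, hg12d, hg13d, hg23d]
    have : -(cos Θk * (sin ri * sin rj)) * -(cos Θj * (sin ri * sin rk))
        - sin ri * sin ri * -(cos Θi * (sin rj * sin rk))
        = ((sin ri * sin ri) * sin rj * sin rk) * (cos Θi + cos Θj * cos Θk) := by ring
    rw [this]
    exact mul_nonneg (by positivity) keyi
  -- pairings with p and q
  have he1 : TripleAux.bf v1 p = ⟪zi, x⟫ - cos ri := by
    show ⟪zi, x⟫ - cos ri * 1 = _; ring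
  have he2 : TripleAux.bf v2 p = ⟪zj, x⟫ - cos rj := by
    show ⟪zj, x⟫ - cos rj * 1 = _; ring
  have he3 : TripleAux.bf v3 p = ⟪zk, x⟫ - cos rk := by
    show ⟪zk, x⟫ - cos rk * 1 = _; ring
  have hf1 : TripleAux.bf v1 q = ⟪zi, y⟫ - cos ri := by
    show ⟪zi, y⟫ - cos ri * 1 = _; ring
  have hf2 : TripleAux.bf v2 q = ⟪zj, y⟫ - cos rj := by
    show ⟪zj, y⟫ - cos rj * 1 = _; ring
  have hf3 : TripleAux.bf v3 q = ⟪zk, y⟫ - cos rk := by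
    show ⟪zk, y⟫ - cos rk * 1 = _; ring
  have hpp : TripleAux.bf p p = 0 := by
    show ⟪x, x⟫ - 1 * 1 = 0
    rw [gxx]; ring
  have hqq : TripleAux.bf q q = 0 := by
    show ⟪y, y⟫ - 1 * 1 = 0
    rw [gyy]; ring
  -- apply the core positivity result
  have hcore := TripleAux.core_pos v1 v2 v3 g11 g12 g13 g22 g23 g33 p q
    (⟪zi, x⟫ - cos ri) (⟪zj, x⟫ - cos rj) (⟪zk, x⟫ - cos rk)
    (⟪zi, y⟫ - cos ri) (⟪zj, y⟫ - cos rj) (⟪zk, y⟫ - cos rk)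
    hg11 hg12 hg13 hg22 hg23 hg33 he1 he2 he3 hf1 hf2 hf3 hpp hqq hd
    hA11 hA22 hA33 hA12 hA13 hA23
    (by linarith) (by linarith) (by linarith)
    (by linarith) (by linarith) (by linarith)
  -- hence ⟪x, y⟫ ≥ 1, so x = y by Cauchy–Schwarz
  have hxy1 : (1:ℝ) ≤ ⟪x, y⟫ := by
    have : TripleAux.bf p q = ⟪x, y⟫ - 1 * 1 := rfl
    rw [this] at hcore
    linarith
  have hxyle : ⟪x, y⟫ ≤ 1 := by
    have := real_inner_le_norm x y
    rw [nx, ny] at this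
    linarith
  have hxeqy : x = y := by
    rw [← inner_eq_one_iff_of_norm_eq_one (𝕜 := ℝ) nx ny]
    linarith
  -- then x lies on all three boundary circles, contradicting nondegeneracy
  rw [← hxeqy] at fyi fyj fyk
  have o1 : TripleAux.bf v1 p = 0 := by rw [he1]; linarith
  have o2 : TripleAux.bf v2 p = 0 := by rw [he2]; linarith
  have o3 : TripleAux.bf v3 p = 0 := by rw [he3]; linarith
  have hp0 := TripleAux.orth_null_eq_zero v1 v2 v3 g11 g12 g13 g22 g23 g33 p
    hg11 hg12 hg13 hg22 hg23 hg33 (ne_of_lt hd) o1 o2 o3 hpp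
  have : (1:ℝ) = 0 := congrArg Prod.snd hp0
  norm_num at this
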